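/- For every labeled monomial tree T, the excess is nonnegative: Δ(T) ≥ 0; equivalently, the number of distinct vertex labels of T is at most |E(T)|/2 + 1. -/
import Mathlib


/-- A labeled monomial tree over labels `{1,…,N}` (encoded as `Fin N`): a finite rooted
tree of depth `t` whose vertices lie in levels `0,…,t` (root at level `t`, all leaves at
level `0`), each vertex carrying a label, subject to the non-backtracking condition and
the condition that every edge-label pair occurs on at least two edges. -/
structure LabeledMonomialTree (N : ℕ) where
  depth : ℕ
  V : Type
  [instFintype : Fintype V]
  [instDecEq : DecidableEq V]
  root : V
  parent : V → V
  level : V → ℕ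
  label : V → Fin N
  parent_root : parent root = root
  level_root : level root = depth
  level_le : ∀ v, level v ≤ depth
  level_parent : ∀ v, v ≠ root → level (parent v) = level v + 1
  leaves_at_zero : ∀ v, 1 ≤ level v → ∃ w, w ≠ root ∧ parent w = v
  nonbacktracking : ∀ w, w ≠ root → parent w ≠ root →
    label (parent (parent w)) ≠ label w
  edges_doubled : ∀ v, v ≠ root → ∃ w, w ≠ root ∧ w ≠ v ∧
    s(label w, label (parent w)) = s(label v, label (parent v))

attribute [instance] LabeledMonomialTree.instFintype LabeledMonomialTree.instDecEq

namespace LabeledMonomialTree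

variable {N : ℕ}

/-- The number of edges of `T` (each non-root vertex contributes the edge to its
parent). -/
def numEdges (T : LabeledMonomialTree N) : ℕ := Fintype.card {v : T.V // v ≠ T.root}

/-- The number of distinct vertex labels of `T`. -/
def numLabels (T : LabeledMonomialTree N) : ℕ := (Finset.univ.image T.label).card

/-- The excess `Δ(T) = |E(T)|/2 - |V(T)| + 1`, where `|V(T)|` is the number of distinct
vertex labels. -/
def excess (T : LabeledMonomialTree N) : ℚ :=
  (T.numEdges : ℚ) / 2 - (T.numLabels : ℚ) + 1

/-- The unordered pair of endpoint labels of the edge from `v` to its parent. -/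
def edgeSym (T : LabeledMonomialTree N) (v : T.V) : Sym2 (Fin N) :=
  s(T.label v, T.label (T.parent v))

/-- The number of vertices of `T` carrying the label `i`. -/
noncomputable def mult (T : LabeledMonomialTree N) (i : Fin N) : ℕ :=
  Set.ncard {v : T.V | T.label v = i}

end LabeledMonomialTree

/-- **Nonnegativity of the excess.** For every labeled monomial tree `T`, `Δ(T) ≥ 0`;
equivalently, the number of distinct vertex labels is at most `|E(T)|/2 + 1`. -/
theorem key {N : ℕ} {V : Type} [Fintype V] [DecidableEq V] (root : V) (parent : V → V)
    (level : V → ℕ) (label : V → Fin N)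
    (level_parent : ∀ v, v ≠ root → level (parent v) = level v + 1)
    (edges_doubled : ∀ v, v ≠ root → ∃ w, w ≠ root ∧ w ≠ v ∧
      s(label w, label (parent w)) = s(label v, label (parent v))) :
    2 * (Finset.univ.image label).card ≤ (Finset.univ.filter (· ≠ root)).card + 2 := by
  classical
  set I : Finset (Fin N) := Finset.univ.image label with hI
  set E : Finset V := Finset.univ.filter (· ≠ root) with hE
  set es : V → Sym2 (Fin N) := fun v => s(label v, label (parent v)) with hes
  set S : Finset (Sym2 (Fin N)) := E.image es with hS
  set r : Fin N := label root with hr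
  -- pick a max-level representative of each label
  have hsel : ∀ i : Fin N, ∃ v : V, ((∃ w, label w = i) → label v = i) ∧
      ∀ w, label w = i → level w ≤ level v := by
    intro i
    by_cases h : ∃ w, label w = i
    · obtain ⟨w0, hw0⟩ := h
      obtain ⟨u, hu, hmax⟩ := Finset.exists_max_image
        (Finset.univ.filter fun w => label w = i) level ⟨w0, by simp [hw0]⟩
      exact ⟨u, fun _ => (Finset.mem_filter.mp hu).2,
        fun w hw => hmax w (by simp [hw])⟩
    · exact ⟨root, fun hw => absurd hw h, fun w hw => absurd ⟨w, hw⟩ h⟩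
  choose f hf1 hf2 using hsel
  -- facts about f on I
  have hlab : ∀ i ∈ I, label (f i) = i := by
    intro i hi
    obtain ⟨w, -, hw⟩ := Finset.mem_image.mp hi
    exact hf1 i ⟨w, hw⟩
  have hfne : ∀ i ∈ I.erase r, f i ≠ root := by
    intro i hi hcon
    have h1 := hlab i (Finset.mem_of_mem_erase hi)
    have h2 := Finset.ne_of_mem_erase hi
    rw [hcon] at h1
    exact h2 (h1 ▸ rfl)
  -- step 1 : injectivity
  have hinj : Set.InjOn (fun i => es (f i)) (I.erase r) := by
    intro i hi j hj hij
    by_contra hne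
    have hilab := hlab i (Finset.mem_of_mem_erase hi)
    have hjlab := hlab j (Finset.mem_of_mem_erase hj)
    have hijp : label (parent (f i)) = j ∧ label (parent (f j)) = i := by
      have := hij
      simp only [hes, hilab, hjlab, Sym2.eq_iff] at this
      rcases this with ⟨h1, h2⟩ | ⟨h1, h2⟩
      · exact absurd h1 hne
      · exact ⟨h2, h1.symm⟩
    have h1 : level (f i) + 1 ≤ level (f j) := by
      rw [← level_parent (f i) (hfne i hi)]
      exact hf2 j _ hijp.1
    have h2 : level (f j) + 1 ≤ level (f i) := by
      rw [← level_parent (f j) (hfne j hj)]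
      exact hf2 i _ hijp.2
    omega
  have hmaps : ∀ i ∈ I.erase r, es (f i) ∈ S := by
    intro i hi
    exact Finset.mem_image_of_mem es (by simp [hE, hfne i hi])
  have hcard1 : (I.erase r).card ≤ S.card :=
    Finset.card_le_card_of_injOn _ hmaps hinj
  -- step 2 : each fiber has size ≥ 2
  have hfib : ∀ s ∈ S, 2 ≤ (E.filter fun v => es v = s).card := by
    intro s hs
    obtain ⟨v, hv, hvs⟩ := Finset.mem_image.mp hs
    have hvne : v ≠ root := by simpa [hE] using hv
    obtain ⟨w, hw1, hw2, hw3⟩ := edges_doubled v hvne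
    have : 1 < (E.filter fun u => es u = s).card := by
      rw [Finset.one_lt_card]
      exact ⟨v, by simp [hE, hvne, hvs], w, by simp only [Finset.mem_filter, Finset.mem_univ, true_and, hes]; exact ⟨by simp [hE, hw1], hw3.trans hvs⟩, hw2.symm⟩
    omega
  have hcard2 : 2 * S.card ≤ E.card := by
    have hsum : E.card = ∑ s ∈ S, (E.filter fun v => es v = s).card :=
      Finset.card_eq_sum_card_fiberwise (fun v hv => Finset.mem_image_of_mem es hv)
    calc 2 * S.card = ∑ _s ∈ S, 2 := by rw [Finset.sum_const, smul_eq_mul, mul_comm]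
      _ ≤ ∑ s ∈ S, (E.filter fun v => es v = s).card := Finset.sum_le_sum hfib
      _ = E.card := hsum.symm
  have hrI : r ∈ I := Finset.mem_image_of_mem label (Finset.mem_univ root)
  have hcard3 : (I.erase r).card = I.card - 1 := Finset.card_erase_of_mem hrI
  have hIpos : 1 ≤ I.card := Finset.card_pos.mpr ⟨r, hrI⟩
  omega

theorem excess_nonneg {N : ℕ} (T : LabeledMonomialTree N) :
    0 ≤ T.excess ∧ (T.numLabels : ℚ) ≤ (T.numEdges : ℚ) / 2 + 1 := by
  have h := key T.root T.parent T.level T.label T.level_parent T.edges_doubled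
  have hE : T.numEdges = (Finset.univ.filter (· ≠ T.root)).card := Fintype.card_subtype _
  have hkey : 2 * T.numLabels ≤ T.numEdges + 2 := by
    rw [hE]; exact h
  have hq : (T.numLabels : ℚ) ≤ (T.numEdges : ℚ) / 2 + 1 := by
    have := (Nat.cast_le (α := ℚ)).mpr hkey
    push_cast at this
    linarith
  exact ⟨by unfold LabeledMonomialTree.excess; linarith, hq⟩
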